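/- Let G be a complex Hilbert space, U a unitary operator on G, H a closed subspace of G with U(H) ⊆ H, and M a closed subspace of H with U(M) ⊆ M. Set N = H ⊖ M (the orthogonal complement of M in H) and W = M ⊖ U(M), and assume the full range condition: N is contained in the closed linear span of {Uᵐ w : m ∈ ℤ, w ∈ W}. Let B : H → H be the compression of U* to H, B f = P_H(U* f), where P_H is the orthogonal projection onto H (in the Hardy space model H = H²_K, G = L²(𝕋,K), U the bilateral shift, B is the backward shift S*). Then for every orthonormal basis (E_i)_{i∈I} of W, the family {Bⁿ(B E_i) : i ∈ I, n ≥ 0} is contained in N and is a Parseval frame of N, i.e., ∑_{i∈I, n≥0} |⟨f, Bⁿ(B E_i)⟩|² = ‖f‖² for all f ∈ N. -/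

import Mathlib

open scoped ComplexInnerProductSpace

/-- Let `U` be a unitary on `G`, `H` a `U`-invariant closed
subspace, `M ⊆ H` a `U`-invariant closed subspace, `N = H ⊖ M`, `W = M ⊖ U(M)`, and
assume the full range condition `N ⊆ closed span {Uᵐ w : m ∈ ℤ, w ∈ W}`. Let
`B f = P_H (U* f)` be the compression of `U*` to `H`. Then for every orthonormal
basis `(Eᵢ)` of `W`, the family `{Bⁿ (B Eᵢ)}` lies in `N` and is a Parseval frame of
`N`. -/
theorem parseval_frame_backward_shift_of_full_range
    (G : Type*) [NormedAddCommGroup G] [InnerProductSpace ℂ G] [CompleteSpace G]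
    (U : G ≃L[ℂ] G) (hU : ∀ x y : G, ⟪U x, U y⟫ = ⟪x, y⟫)
    (H M : Submodule ℂ G) [CompleteSpace H] (hMclosed : IsClosed (M : Set G))
    (hMH : M ≤ H)
    (hUH : ∀ x ∈ H, U x ∈ H) (hUM : ∀ x ∈ M, U x ∈ M)
    (N W : Submodule ℂ G)
    (hN : N = H ⊓ Mᗮ)
    (hW : W = M ⊓ (M.map ((U : G →L[ℂ] G) : G →ₗ[ℂ] G))ᗮ)
    (hfullrange : N ≤
      (Submodule.span ℂ {x : G | ∃ (m : ℤ) (w : G), w ∈ W ∧ x = (U ^ m) w}).topologicalClosure)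
    (B : G →L[ℂ] G)
    (hB : ∀ f : G,
      B f = (Submodule.orthogonalProjectionOnto H ((ContinuousLinearMap.adjoint (U : G →L[ℂ] G)) f) : G))
    {I : Type*} (E : I → G) (hEW : ∀ i, E i ∈ W) (hON : Orthonormal ℂ E)
    (hspan : (Submodule.span ℂ (Set.range E)).topologicalClosure = W) :
    (∀ (i : I) (n : ℕ), (B ^ n) (B (E i)) ∈ N) ∧
      ∀ f ∈ N, ∑' p : I × ℕ, ‖⟪f, (B ^ p.2) (B (E p.1))⟫‖ ^ 2 = ‖f‖ ^ 2 := by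
  classical
  -- basic inner-product facts for powers of `U`
  have hUsymm : ∀ x y : G, ⟪U.symm x, U.symm y⟫ = ⟪x, y⟫ := by
    intro x y
    calc ⟪U.symm x, U.symm y⟫ = ⟪U (U.symm x), U (U.symm y)⟫ := (hU _ _).symm
    _ = ⟪x, y⟫ := by simp
  have hmul : ∀ (V V' : G ≃L[ℂ] G) (x : G), (V * V') x = V (V' x) := fun _ _ _ => rfl
  have hUz : ∀ (m : ℤ) (x y : G), ⟪(U ^ m) x, (U ^ m) y⟫ = ⟪x, y⟫ := by
    intro m
    induction m using Int.induction_on with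
    | zero => intro x y; rw [zpow_zero]; rfl
    | succ n ih =>
      intro x y
      have h1 : ∀ z : G, (U ^ ((n : ℤ) + 1)) z = (U ^ (n : ℤ)) (U z) := by
        intro z; rw [zpow_add_one, hmul]
      rw [h1, h1, ih, hU]
    | pred n ih =>
      intro x y
      have h1 : ∀ z : G, (U ^ (-(n : ℤ) - 1)) z = (U ^ (-(n : ℤ))) (U⁻¹ z) := by
        intro z; rw [zpow_sub_one, hmul]
      have h2 : ∀ z : G, U⁻¹ z = U.symm z := fun z => rfl
      rw [h1, h1, ih, h2, h2, hUsymm]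
  have hcancel : ∀ (m : ℤ) (y : G), (U ^ m) ((U ^ (-m)) y) = y := by
    intro m y
    rw [← hmul, ← zpow_add, add_neg_cancel, zpow_zero]
    rfl
  have hzadd : ∀ (a c : ℤ) (x : G), (U ^ (a + c)) x = (U ^ a) ((U ^ c) x) := by
    intro a c x; rw [zpow_add, hmul]
  -- invariance of `M` and `H` under natural powers of `U`
  have hMpow : ∀ (k : ℕ) (x : G), x ∈ M → (U ^ (k : ℤ)) x ∈ M := by
    intro k
    induction k with
    | zero => intro x hx; simp only [Nat.cast_zero, zpow_zero]; exact hx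
    | succ n ih =>
      intro x hx
      have : ((n + 1 : ℕ) : ℤ) = (n : ℤ) + 1 := by push_cast; ring
      rw [this, zpow_add_one, hmul]
      exact ih _ (hUM x hx)
  have hHpow : ∀ (k : ℕ) (x : G), x ∈ H → (U ^ (k : ℤ)) x ∈ H := by
    intro k
    induction k with
    | zero => intro x hx; simp only [Nat.cast_zero, zpow_zero]; exact hx
    | succ n ih =>
      intro x hx
      have : ((n + 1 : ℕ) : ℤ) = (n : ℤ) + 1 := by push_cast; ring
      rw [this, zpow_add_one, hmul]
      exact ih _ (hUH x hx)
  -- positive powers land in `U(M)`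
  have hMposmap : ∀ (d : ℤ), 0 < d → ∀ x ∈ M, (U ^ d) x ∈ M.map ((U : G →L[ℂ] G) : G →ₗ[ℂ] G) := by
    intro d hd x hx
    obtain ⟨k, rfl⟩ : ∃ k : ℕ, d = 1 + (k : ℤ) := ⟨(d - 1).toNat, by omega⟩
    rw [hzadd, zpow_one]
    exact ⟨(U ^ (k : ℤ)) x, hMpow k x hx, rfl⟩
  -- elements of `W` are orthogonal to `U(M)`
  have hWmem : ∀ w ∈ W, w ∈ M := fun w hw => (hW ▸ hw).1
  have hWorth : ∀ w ∈ W, ∀ u ∈ M.map ((U : G →L[ℂ] G) : G →ₗ[ℂ] G), ⟪w, u⟫ = 0 := by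
    intro w hw u hu
    exact (Submodule.mem_orthogonal' _ _).mp (hW ▸ hw).2 u hu
  -- orthogonality between shifted copies of `W`
  have hEshift : ∀ (d : ℤ), d ≠ 0 → ∀ (w w' : G), w ∈ W → w' ∈ W → ⟪w, (U ^ d) w'⟫ = 0 := by
    have pos : ∀ (d : ℤ), 0 < d → ∀ (w w' : G), w ∈ W → w' ∈ W → ⟪w, (U ^ d) w'⟫ = 0 := by
      intro d hd w w' hw hw'
      exact hWorth w hw _ (hMposmap d hd w' (hWmem w' hw'))
    intro d hd w w' hw hw'
    rcases lt_or_gt_of_ne hd with hneg | hpos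
    · have h1 : ⟪(U ^ d) w', w⟫ = 0 := by
        have hcw : w = (U ^ d) ((U ^ (-d)) w) := (hcancel d w).symm
        calc ⟪(U ^ d) w', w⟫ = ⟪(U ^ d) w', (U ^ d) ((U ^ (-d)) w)⟫ := by rw [← hcw]
        _ = ⟪w', (U ^ (-d)) w⟫ := hUz d _ _
        _ = 0 := pos (-d) (by omega) w' w hw' hw
      rw [← inner_conj_symm, h1, map_zero]
    · exact pos d hpos w w' hw hw'
  -- the doubly-indexed family
  set F : ℤ × I → G := fun p => (U ^ p.1) (E p.2) with hF
  have hFon : Orthonormal ℂ F := by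
    rw [orthonormal_iff_ite]
    rintro ⟨m, i⟩ ⟨m', j⟩
    have key : ⟪F (m, i), F (m', j)⟫ = ⟪E i, (U ^ (m' - m)) (E j)⟫ := by
      have : (U ^ m') (E j) = (U ^ m) ((U ^ (m' - m)) (E j)) := by
        rw [← hzadd]; ring_nf
      simp only [hF]
      rw [this, hUz]
    by_cases hm : m = m'
    · subst hm
      rw [key, sub_self, zpow_zero]
      have h2 := orthonormal_iff_ite.mp hON i j
      have h3 : ((1 : G ≃L[ℂ] G) (E j)) = E j := rfl
      rw [h3, h2]
      by_cases hij : i = j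
      · simp [hij]
      · simp [hij, Prod.ext_iff]
    · rw [key, hEshift (m' - m) (by omega) _ _ (hEW i) (hEW j)]
      have : ((m, i) : ℤ × I) ≠ (m', j) := by
        simp [Prod.ext_iff]; intro h; exact absurd h hm
      simp [this]
  -- the closed span of the family
  set K : Submodule ℂ G := (Submodule.span ℂ (Set.range F)).topologicalClosure with hK
  haveI : CompleteSpace K :=
    (Submodule.isClosed_topologicalClosure _).completeSpace_coe
  have hFK : ∀ p, F p ∈ K :=
    fun p => (Submodule.span ℂ (Set.range F)).le_topologicalClosure
      (Submodule.subset_span ⟨p, rfl⟩)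
  set F' : ℤ × I → K := fun p => ⟨F p, hFK p⟩ with hF'
  have hF'on : Orthonormal ℂ F' := by
    rw [orthonormal_iff_ite]
    intro p q
    have : ⟪F' p, F' q⟫ = ⟪F p, F q⟫ := rfl
    rw [this, orthonormal_iff_ite.mp hFon]
  have hdense : ⊤ ≤ (Submodule.span ℂ (Set.range F')).topologicalClosure := by
    intro x _
    have hx : (x : G) ∈ closure ((Submodule.span ℂ (Set.range F) : Set G)) := x.2
    have himg : (Subtype.val '' (Submodule.span ℂ (Set.range F') : Set K))
        = (Submodule.span ℂ (Set.range F) : Set G) := by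
      have h1 : (Submodule.span ℂ (Set.range F')).map K.subtype
          = Submodule.span ℂ (Set.range F) := by
        rw [Submodule.map_span]
        congr 1
        ext y
        constructor
        · rintro ⟨z, ⟨p, rfl⟩, rfl⟩; exact ⟨p, rfl⟩
        · rintro ⟨p, rfl⟩; exact ⟨F' p, ⟨p, rfl⟩, rfl⟩
      rw [← h1]; rfl
    have : x ∈ closure ((Submodule.span ℂ (Set.range F') : Set K)) := by
      rw [closure_subtype, himg]
      exact hx
    exact this
  set b : HilbertBasis (ℤ × I) ℂ K := HilbertBasis.mk hF'on hdense with hb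
  -- key inner-product identity for `B`
  have hBkey : ∀ (x : G), x ∈ H → ∀ (g : G), ⟪x, B g⟫ = ⟪U x, g⟫ := by
    intro x hx g
    rw [hB g]
    have h1 : ⟪x, ((Submodule.orthogonalProjectionOnto H ((ContinuousLinearMap.adjoint
        (U : G →L[ℂ] G)) g)) : G)⟫
        = ⟪(⟨x, hx⟩ : H), Submodule.orthogonalProjectionOnto H ((ContinuousLinearMap.adjoint
        (U : G →L[ℂ] G)) g)⟫ := rfl
    rw [h1, Submodule.inner_orthogonalProjectionOnto_eq_of_mem_left,
      ContinuousLinearMap.adjoint_inner_right]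
    rfl
  -- inner products against iterates of `B`
  have hBn : ∀ (n : ℕ) (x : G), x ∈ H → ∀ g : G,
      ⟪x, (B ^ n) (B g)⟫ = ⟪(U ^ ((n : ℤ) + 1)) x, g⟫ := by
    intro n
    induction n with
    | zero =>
      intro x hx g
      have h0 : (B ^ 0) (B g) = B g := by rw [pow_zero]; rfl
      rw [h0, hBkey x hx g]
      norm_num
    | succ n ih =>
      intro x hx g
      have h1 : (B ^ (n + 1)) (B g) = (B ^ n) (B (B g)) := by
        rw [pow_succ]; rfl
      rw [h1, ih x hx (B g)]
      have hxH : (U ^ ((n : ℤ) + 1)) x ∈ H := by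
        have : ((n + 1 : ℕ) : ℤ) = (n : ℤ) + 1 := by push_cast; ring
        rw [← this]
        exact hHpow (n + 1) x hx
      rw [hBkey _ hxH g]
      have harg : (U ^ (((n + 1 : ℕ) : ℤ) + 1)) x = U ((U ^ ((n : ℤ) + 1)) x) := by
        have he : (((n + 1 : ℕ) : ℤ)) + 1 = 1 + ((n : ℤ) + 1) := by push_cast; ring
        rw [he, hzadd, zpow_one]
      rw [harg]
  -- membership of the frame vectors in `N`
  have hNmem : ∀ x : G, (∀ m ∈ M, ⟪U m, x⟫ = 0) → B x ∈ N := by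
    intro x hx
    rw [hN, Submodule.mem_inf]
    refine ⟨by rw [hB x]; exact SetLike.coe_mem _, (Submodule.mem_orthogonal _ _).mpr ?_⟩
    intro u hu
    rw [hBkey u (hMH hu) x]
    exact hx u hu
  have hNhyp : ∀ x ∈ N, ∀ m ∈ M, ⟪U m, x⟫ = 0 := by
    intro x hx m hm
    exact (Submodule.mem_orthogonal _ _).mp (hN ▸ hx).2 (U m) (hUM m hm)
  have hEhyp : ∀ i, ∀ m ∈ M, ⟪U m, E i⟫ = 0 := by
    intro i m hm
    exact (Submodule.mem_orthogonal _ _).mp (hW ▸ hEW i).2 (U m)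
      (Submodule.mem_map_of_mem hm)
  have memN : ∀ (i : I) (n : ℕ), (B ^ n) (B (E i)) ∈ N := by
    intro i n
    induction n with
    | zero =>
      have h0 : (B ^ 0) (B (E i)) = B (E i) := by rw [pow_zero]; rfl
      rw [h0]
      exact hNmem _ (hEhyp i)
    | succ n ih =>
      have h1 : (B ^ (n + 1)) (B (E i)) = B ((B ^ n) (B (E i))) := by
        rw [pow_succ']; rfl
      rw [h1]
      exact hNmem _ (hNhyp _ ih)
  refine ⟨memN, ?_⟩
  intro f hf
  have hfH : f ∈ H := (hN ▸ hf).1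
  have hfMo : f ∈ Mᗮ := (hN ▸ hf).2
  -- `f` lies in `K`
  have hfK : f ∈ K := by
    have hsub : (Submodule.span ℂ
        {x : G | ∃ (m : ℤ) (w : G), w ∈ W ∧ x = (U ^ m) w}).topologicalClosure ≤ K := by
      apply Submodule.topologicalClosure_minimal
      · rw [Submodule.span_le]
        rintro x ⟨m, w, hw, rfl⟩
        have hw' : w ∈ closure ((Submodule.span ℂ (Set.range E) : Set G)) := by
          rw [← hspan] at hw; exact hw
        have hcont : Continuous fun z : G => (U ^ m) z := (U ^ m).continuous
        have himg : (U ^ m) w ∈ closure ((fun z : G => (U ^ m) z) ''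
            (Submodule.span ℂ (Set.range E) : Set G)) := by
          have := image_closure_subset_closure_image hcont (s :=
            (Submodule.span ℂ (Set.range E) : Set G))
          exact this ⟨w, hw', rfl⟩
        refine closure_mono ?_ himg
        rintro y ⟨z, hz, rfl⟩
        have hz' : (U ^ m) z ∈ (Submodule.span ℂ (Set.range E)).map
            (((U ^ m : G ≃L[ℂ] G) : G →L[ℂ] G) : G →ₗ[ℂ] G) := ⟨z, hz, rfl⟩
        rw [Submodule.map_span] at hz'
        refine Submodule.span_mono ?_ hz'
        rintro y ⟨z, ⟨j, rfl⟩, rfl⟩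
        exact ⟨(m, j), rfl⟩
      · exact Submodule.isClosed_topologicalClosure _
    exact hsub (hfullrange hf)
  set f' : K := ⟨f, hfK⟩ with hf'
  -- Parseval for the doubly-indexed orthonormal basis
  have hParsum : HasSum (fun q : ℤ × I => ‖⟪f, F q⟫‖ ^ 2) (‖f‖ ^ 2) := by
    have h1 := b.hasSum_inner_mul_inner f' f'
    have h2 := h1.mapL (RCLike.reCLM (K := ℂ))
    have hterm : ∀ q : ℤ × I,
        RCLike.reCLM (K := ℂ) (⟪f', b q⟫ * ⟪b q, f'⟫) = ‖⟪f, F q⟫‖ ^ 2 := by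
      intro q
      have hbq : b q = F' q := by rw [hb, HilbertBasis.coe_mk]
      have hc : ⟪f', b q⟫ = ⟪f, F q⟫ := by rw [hbq]; rfl
      have hc' : ⟪b q, f'⟫ = (starRingEnd ℂ) ⟪f', b q⟫ := (inner_conj_symm _ _).symm
      rw [hc', hc, Complex.mul_conj]
      simp [Complex.normSq_eq_norm_sq, ← Complex.ofReal_pow]
    have hval : RCLike.reCLM (K := ℂ) ⟪f', f'⟫ = ‖f‖ ^ 2 := by
      have : ⟪f', f'⟫ = ⟪f, f⟫ := rfl
      rw [this]
      have hre : ((RCLike.reCLM : ℂ →L[ℝ] ℝ) : ℂ → ℝ) = RCLike.re := RCLike.reCLM_apply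
      calc (RCLike.reCLM : ℂ →L[ℝ] ℝ) ⟪f, f⟫ = RCLike.re ⟪f, f⟫ := by rw [hre]
      _ = ‖f‖ ^ 2 := inner_self_eq_norm_sq f
    rw [hval] at h2
    exact h2.congr_fun fun q => (hterm q).symm
  -- reindexing: only the strictly negative powers contribute
  set g : I × ℕ → ℤ × I := fun p => (-(p.2 : ℤ) - 1, p.1) with hg
  have hginj : Function.Injective g := by
    rintro ⟨i, n⟩ ⟨j, m⟩ h
    simp only [hg, Prod.ext_iff] at h
    obtain ⟨h1, h2⟩ := h
    exact Prod.ext (by exact h2) (by omega)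
  have hsupp : Function.support (fun q : ℤ × I => ‖⟪f, F q⟫‖ ^ 2) ⊆ Set.range g := by
    rintro ⟨m, i⟩ hq
    by_cases hm : 0 ≤ m
    · exfalso
      apply hq
      have hFM : F (m, i) ∈ M := by
        have : m = ((m.toNat : ℕ) : ℤ) := by omega
        simp only [hF]
        rw [this]
        exact hMpow _ _ (hWmem _ (hEW i))
      have : ⟪f, F (m, i)⟫ = 0 := (Submodule.mem_orthogonal' _ _).mp hfMo _ hFM
      simp [this]
    · exact ⟨(i, (-m - 1).toNat), by
        simp only [hg, Prod.mk.injEq]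
        exact ⟨by omega, trivial⟩⟩
  have hreindex := hginj.tsum_eq (f := fun q : ℤ × I => ‖⟪f, F q⟫‖ ^ 2) hsupp
  -- identify the terms
  have hterm2 : ∀ p : I × ℕ,
      ‖⟪f, (B ^ p.2) (B (E p.1))⟫‖ ^ 2 = ‖⟪f, F (g p)⟫‖ ^ 2 := by
    rintro ⟨i, n⟩
    have h1 : ⟪f, (B ^ n) (B (E i))⟫ = ⟪(U ^ ((n : ℤ) + 1)) f, E i⟫ := hBn n f hfH (E i)
    have h2 : ⟪f, F (-(n : ℤ) - 1, i)⟫ = ⟪(U ^ ((n : ℤ) + 1)) f, E i⟫ := by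
      have h3 : F (-(n : ℤ) - 1, i) = (U ^ (-((n : ℤ) + 1))) (E i) := by
        simp only [hF]; ring_nf
      rw [h3, ← hUz ((n : ℤ) + 1) f ((U ^ (-((n : ℤ) + 1))) (E i)), hcancel]
    simp only [hg]
    rw [h1, h2]
  calc ∑' p : I × ℕ, ‖⟪f, (B ^ p.2) (B (E p.1))⟫‖ ^ 2
      = ∑' p : I × ℕ, ‖⟪f, F (g p)⟫‖ ^ 2 := by
        exact tsum_congr hterm2
    _ = ∑' q : ℤ × I, ‖⟪f, F q⟫‖ ^ 2 := hreindex
    _ = ‖f‖ ^ 2 := hParsum.tsum_eq
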